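/- Upper bound via positive utility: for any itemset X, u(X) ≤ pu(X), and pu itself need not be anti-monotone in general, but pu(X) ≤ SUM(X.pu) + SUM(X.rpu) when all items of X are counted, where rpu counts positive utilities of items succeeding X; in particular u(X) ≤ SUM(X.pu) + SUM(X.rpu). -/
import Mathlib


open Finset

def utilT {α ι : Type} (pr : α → ℤ) (q : α → ι → ℕ) (X : Finset α) (t : ι) : ℤ :=
  ∑ i ∈ X, pr i * (q i t : ℤ)

def totU {α ι : Type} [DecidableEq α] (D : Finset ι) (Trans : ι → Finset α)
    (pr : α → ℤ) (q : α → ι → ℕ) (X : Finset α) : ℤ :=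
  ∑ t ∈ D.filter (fun t => X ⊆ Trans t), utilT pr q X t

def puT {α ι : Type} [DecidableEq α] (pr : α → ℤ) (q : α → ι → ℕ) (Z : Finset α) (t : ι) : ℤ :=
  ∑ i ∈ Z.filter (fun i => 0 < pr i), pr i * (q i t : ℤ)

def rpuT {α ι : Type} [DecidableEq α] [LinearOrder α] (Trans : ι → Finset α)
    (pr : α → ℤ) (q : α → ι → ℕ) (Z : Finset α) (t : ι) : ℤ :=
  ∑ i ∈ (Trans t).filter (fun i => (∀ x ∈ Z, x < i) ∧ 0 < pr i), pr i * (q i t : ℤ)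

def SUMpu {α ι : Type} [DecidableEq α] (D : Finset ι) (Trans : ι → Finset α)
    (pr : α → ℤ) (q : α → ι → ℕ) (Z : Finset α) : ℤ :=
  ∑ t ∈ D.filter (fun t => Z ⊆ Trans t), puT pr q Z t

def SUMrpu {α ι : Type} [DecidableEq α] [LinearOrder α] (D : Finset ι) (Trans : ι → Finset α)
    (pr : α → ℤ) (q : α → ι → ℕ) (Z : Finset α) : ℤ :=
  ∑ t ∈ D.filter (fun t => Z ⊆ Trans t), rpuT Trans pr q Z t

/-- The utility of `X` is bounded by `SUM(X.pu) + SUM(X.rpu)`. -/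
theorem stmt17 {α ι : Type} [DecidableEq α] [LinearOrder α] (D : Finset ι)
    (Trans : ι → Finset α) (pr : α → ℤ) (q : α → ι → ℕ)
    (hq : ∀ i t, 0 < q i t) (X : Finset α) :
    totU D Trans pr q X ≤ SUMpu D Trans pr q X + SUMrpu D Trans pr q X := by
  have h1 : totU D Trans pr q X ≤ SUMpu D Trans pr q X := by
    apply Finset.sum_le_sum
    intro t _
    unfold utilT puT
    rw [← Finset.sum_filter_add_sum_filter_not X (fun i => 0 < pr i)]
    have : ∑ i ∈ X.filter (fun i => ¬ 0 < pr i), pr i * (q i t : ℤ) ≤ 0 := by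
      apply Finset.sum_nonpos
      intro i hi
      simp only [Finset.mem_filter, not_lt] at hi
      exact mul_nonpos_of_nonpos_of_nonneg hi.2 (by positivity)
    linarith
  have h2 : (0:ℤ) ≤ SUMrpu D Trans pr q X := by
    apply Finset.sum_nonneg
    intro t _
    apply Finset.sum_nonneg
    intro i hi
    simp only [Finset.mem_filter] at hi
    exact mul_nonneg hi.2.2.le (by positivity)
  linarith
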